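/- For r ∈ (0,1), Σ_{k∈ℤ} 1/(r+k)² = π²/sin²(πr). -/

import Mathlib

open Real

noncomputable section SumInvSqAux

open Complex MeasureTheory Set AddCircle intervalIntegral

namespace SumInvSqAux

lemma measurable_liftIco (p a : ℝ) [Fact (0 < p)] {f : ℝ → ℂ} (hf : Continuous f) :
    Measurable (AddCircle.liftIco p a f) := by
  have h : AddCircle.liftIco p a f =
      (f ∘ (fun x : Set.Ico a (a + p) => (x : ℝ))) ∘ (AddCircle.measurableEquivIco p a) := by
    ext x; rfl
  rw [h]
  exact ((hf.comp continuous_subtype_val).measurable).comp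
    (AddCircle.measurableEquivIco p a).measurable

lemma fc (r : ℝ) (hrn : ∀ n : ℤ, (r:ℝ) ≠ n) (n : ℤ) :
    fourierCoeffOn zero_lt_one (fun x : ℝ => Complex.exp (2 * π * I * r * x)) n
      = (Complex.exp (2 * π * I * r) - 1) / (2 * π * I * (r - n)) := by
  have hrn' : (r : ℂ) - n ≠ 0 := by
    intro h
    exact hrn n (by exact_mod_cast sub_eq_zero.mp h)
  have hc : (2 * (π:ℂ) * I * (r - n)) ≠ 0 := by
    simp [Real.pi_ne_zero, Complex.I_ne_zero, hrn']
  rw [fourierCoeffOn_eq_integral]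
  have hint : ∀ x ∈ uIcc (0:ℝ) 1,
      fourier (-n) (x : AddCircle (1 - 0 : ℝ)) • Complex.exp (2 * π * I * r * x)
        = Complex.exp ((2 * π * I * (r - n)) * x) := by
    intro x _
    rw [smul_eq_mul, fourier_coe_apply, ← Complex.exp_add]
    congr 1
    push_cast
    norm_num
    ring
  rw [intervalIntegral.integral_congr hint, integral_exp_mul_complex hc]
  have h1 : (2 * (π:ℂ) * I * (r - n)) * 1 = 2*π*I*r - n*(2*π*I) := by ring
  have h2 : (2 * (π:ℂ) * I * (r - n)) * 0 = 0 := by ring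
  push_cast
  rw [h1, h2, Complex.exp_sub, Complex.exp_int_mul_two_pi_mul_I, div_one, Complex.exp_zero]
  norm_num

lemma nrm (r : ℝ) (n : ℤ) :
    ‖(Complex.exp (2 * π * I * r) - 1) / (2 * π * I * (r - n))‖ ^ 2
      = Real.sin (π * r) ^ 2 / π ^ 2 * (1 / (r - n) ^ 2) := by
  rw [norm_div, div_pow]
  have h1 : (2 * (π:ℂ) * I * r) = ((2 * π * r : ℝ) : ℂ) * I := by push_cast; ring
  have hnum : ‖Complex.exp (2 * π * I * r) - 1‖ ^ 2 = 4 * Real.sin (π * r) ^ 2 := by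
    rw [h1, Complex.exp_mul_I]
    rw [Complex.sq_norm, Complex.normSq_apply]
    simp only [Complex.sub_re, Complex.add_re, Complex.cos_ofReal_re, Complex.mul_re,
      Complex.sin_ofReal_re, Complex.I_re, Complex.sin_ofReal_im, Complex.I_im, Complex.one_re,
      Complex.sub_im, Complex.add_im, Complex.cos_ofReal_im, Complex.mul_im, Complex.one_im]
    have h2 := Real.cos_two_mul (π * r)
    have h3 := Real.sin_sq_add_cos_sq (2 * π * r)
    have h4 := Real.sin_sq_add_cos_sq (π * r)
    have h5 : 2 * (π * r) = 2 * π * r := by ring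
    rw [h5] at h2
    nlinarith [h2, h3, h4]
  have hden : ‖(2 * (π:ℂ) * I * (r - n))‖ ^ 2 = 4 * π ^ 2 * (r - n) ^ 2 := by
    have : ((r:ℂ) - n) = ((r - n : ℝ) : ℂ) := by push_cast; ring
    rw [this]
    simp only [norm_mul, Complex.norm_ofNat, Complex.norm_real, Complex.norm_I, mul_one,
      Real.norm_eq_abs]
    rw [mul_pow, mul_pow, _root_.sq_abs, _root_.sq_abs]
    norm_num
  rw [hnum, hden]
  rcases eq_or_ne (r - (n:ℝ)) 0 with h | h
  · rw [h]; norm_num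
  · field_simp

lemma key (r : ℝ) (hr0 : 0 < r) (hr1 : r < 1) :
    ∑' n : ℤ, 1 / (r - n) ^ 2 = π ^ 2 / Real.sin (π * r) ^ 2 := by
  have hrn : ∀ n : ℤ, (r : ℝ) ≠ n := by
    intro n h
    rcases le_or_gt n 0 with h1 | h1
    · have : (n : ℝ) ≤ 0 := by exact_mod_cast h1
      linarith [h ▸ this]
    · have : (1 : ℝ) ≤ n := by exact_mod_cast h1
      linarith [h ▸ this]
  haveI : Fact (0 < (1:ℝ)) := ⟨zero_lt_one⟩
  set g : ℝ → ℂ := fun x => Complex.exp (2 * π * I * r * x) with hg_def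
  have hg_cont : Continuous g :=
    Complex.continuous_exp.comp (continuous_const.mul Complex.continuous_ofReal)
  have hg_norm : ∀ x : ℝ, ‖g x‖ = 1 := by
    intro x
    rw [hg_def]
    simp only [Complex.norm_exp]
    norm_num [Complex.mul_re, Complex.mul_im]
  set F : UnitAddCircle → ℂ := AddCircle.liftIco 1 0 g with hF_def
  have hF_norm : ∀ t, ‖F t‖ = 1 := fun t => hg_norm _
  have hF_meas : Measurable F := measurable_liftIco 1 0 hg_cont
  have hmem : MeasureTheory.MemLp F 2 AddCircle.haarAddCircle :=
    (MeasureTheory.memLp_top_of_bound hF_meas.aestronglyMeasurable 1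
      (Filter.Eventually.of_forall fun t => (hF_norm t).le)).mono_exponent le_top
  set f2 := hmem.toLp F with hf2_def
  have hcoeff : ∀ i : ℤ, fourierCoeff (⇑f2) i = fourierCoeff F i := by
    intro i
    simp only [fourierCoeff]
    refine MeasureTheory.integral_congr_ae ?_
    filter_upwards [hmem.coeFn_toLp] with t ht
    rw [ht]
  have hrhs : (∫ t, ‖f2 t‖ ^ 2 ∂AddCircle.haarAddCircle) = 1 := by
    rw [MeasureTheory.integral_congr_ae (g := fun _ => (1:ℝ)) ?_]
    · simp
    · filter_upwards [hmem.coeFn_toLp] with t ht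
      rw [ht, hF_norm t, one_pow]
  have hFc : ∀ i : ℤ, fourierCoeff F i
      = (Complex.exp (2 * π * I * r) - 1) / (2 * π * I * (r - i)) := by
    intro i
    rw [hF_def, fourierCoeff_liftIco_eq]
    rw [← fc r hrn i]
    congr 1 ; norm_num
  have hpars := tsum_sq_fourierCoeff f2
  rw [hrhs] at hpars
  have hsum : (∑' n : ℤ, Real.sin (π * r) ^ 2 / π ^ 2 * (1 / (r - n) ^ 2)) = 1 :=
    (tsum_congr fun n => by rw [hcoeff n, hFc n, nrm r n]).trans hpars
  rw [tsum_mul_left] at hsum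
  have hs : Real.sin (π * r) ≠ 0 := by
    have := Real.sin_pos_of_pos_of_lt_pi (mul_pos Real.pi_pos hr0)
      (by nlinarith [Real.pi_pos] : π * r < π)
    linarith
  have hπ : (π : ℝ) ≠ 0 := Real.pi_ne_zero
  field_simp at hsum ⊢
  linarith [hsum]

end SumInvSqAux

end SumInvSqAux

theorem sum_inv_sq_shifted (r : ℝ) (hr0 : 0 < r) (hr1 : r < 1) :
    ∑' k : ℤ, 1 / ((r : ℝ) + k) ^ 2 = Real.pi ^ 2 / Real.sin (Real.pi * r) ^ 2 := by
  rw [← SumInvSqAux.key r hr0 hr1]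
  rw [← (Equiv.neg ℤ).tsum_eq (fun n : ℤ => 1 / (r - (n : ℝ)) ^ 2)]
  congr 1
  ext k
  simp [sub_neg_eq_add]
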